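/- If a graph G has a generating sequence (G_1, …, G_k), then for every i ∈ [k] the graph G also has a generating sequence (H_1, …, H_k) of the same length with H_1 = G_i. -/

import Mathlib

open SimpleGraph

/-- `S` is a stable cutset of `G`: an independent set whose removal disconnects `G`. -/
def SimpleGraph.IsStableCutset {V : Type*} (G : SimpleGraph V) (S : Set V) : Prop :=
  (∀ a ∈ S, ∀ b ∈ S, ¬ G.Adj a b) ∧ ¬ (G.induce Sᶜ).Preconnected

def SimpleGraph.HasStableCutset {V : Type*} (G : SimpleGraph V) : Prop :=
  ∃ S : Set V, G.IsStableCutset S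

/-- The cycle on six vertices. -/
def CycleSix : SimpleGraph (Fin 6) := SimpleGraph.fromRel (fun i j => j = i + 1)

/-- The complement of `C₆`, i.e. the triangular prism. -/
def PrismGraph : SimpleGraph (Fin 6) := CycleSixᶜ

/-- Graphs on (subsets of) a fixed ambient vertex type `α`, with graph-wise
union and intersection given by the lattice structure. -/
abbrev AmbGraph (α : Type*) := SimpleGraph.Subgraph (⊤ : SimpleGraph α)

def IsK2 {α : Type*} (H : AmbGraph α) : Prop :=
  Nonempty (H.coe ≃g (⊤ : SimpleGraph (Fin 2)))

def IsK3 {α : Type*} (H : AmbGraph α) : Prop :=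
  Nonempty (H.coe ≃g (⊤ : SimpleGraph (Fin 3)))

def IsPrism {α : Type*} (H : AmbGraph α) : Prop :=
  Nonempty (H.coe ≃g PrismGraph)

/-- The class `G_sc` of Le and Pfender. -/
inductive Gsc {α : Type*} : AmbGraph α → Prop
  | k3 (H : AmbGraph α) : IsK3 H → Gsc H
  | prism (H : AmbGraph α) : IsPrism H → Gsc H
  | union (G H : AmbGraph α) : Gsc G → Gsc H →
      (IsK2 (G ⊓ H) ∨ IsK3 (G ⊓ H)) → Gsc (G ⊔ H)

def unionList {α : Type*} (L : List (AmbGraph α)) : AmbGraph α := L.foldr (· ⊔ ·) ⊥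

/-- `L = (G₁,…,G_k)` is a generating sequence for `G`. -/
def IsGenSeq {α : Type*} (L : List (AmbGraph α)) (G : AmbGraph α) : Prop :=
  L ≠ [] ∧ (∀ H ∈ L, IsK3 H ∨ IsPrism H) ∧
  (∀ i : ℕ, (h : i + 1 < L.length) →
     IsK2 (unionList (L.take (i + 1)) ⊓ L.get ⟨i + 1, h⟩) ∨
     IsK3 (unionList (L.take (i + 1)) ⊓ L.get ⟨i + 1, h⟩)) ∧
  unionList L = G

section Helpers
variable {α : Type*}


lemma unionList_nil : unionList ([] : List (AmbGraph α)) = ⊥ := rfl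

lemma unionList_cons' (a : AmbGraph α) (l : List (AmbGraph α)) :
    unionList (a :: l) = a ⊔ unionList l := rfl

lemma le_unionList {H : AmbGraph α} {l : List (AmbGraph α)} (h : H ∈ l) : H ≤ unionList l := by
  induction l with
  | nil => simp at h
  | cons a t ih =>
    rcases List.mem_cons.mp h with rfl | h
    · exact le_sup_left
    · exact (ih h).trans le_sup_right

lemma unionList_adj {l : List (AmbGraph α)} {a b : α} :
    (unionList l).Adj a b ↔ ∃ H ∈ l, H.Adj a b := by
  induction l with
  | nil => simp [unionList_nil]
  | cons c t ih => simp [unionList_cons', Subgraph.sup_adj, ih]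

lemma mem_unionList_verts {l : List (AmbGraph α)} {a : α} :
    a ∈ (unionList l).verts ↔ ∃ H ∈ l, a ∈ H.verts := by
  induction l with
  | nil => simp [unionList_nil]
  | cons c t ih => simp [unionList_cons', Subgraph.verts_sup, ih]

lemma unionList_append (l₁ l₂ : List (AmbGraph α)) :
    unionList (l₁ ++ l₂) = unionList l₁ ⊔ unionList l₂ := by
  induction l₁ with
  | nil => simp [unionList_nil]
  | cons c t ih => rw [List.cons_append, unionList_cons', unionList_cons', ih, sup_assoc]

lemma unionList_concat (l : List (AmbGraph α)) (x : AmbGraph α) :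
    unionList (l ++ [x]) = unionList l ⊔ x := by
  rw [unionList_append]; simp [unionList_cons', unionList_nil]

/-- Completeness: every two distinct vertices are adjacent. -/
def Cmpl (H : AmbGraph α) : Prop :=
  ∀ ⦃a⦄, a ∈ H.verts → ∀ ⦃b⦄, b ∈ H.verts → a ≠ b → H.Adj a b

lemma cmpl_of_isK2K3 {H : AmbGraph α} (h : IsK2 H ∨ IsK3 H) : Cmpl H := by
  have key : ∀ (n : ℕ) (e : H.coe ≃g (⊤ : SimpleGraph (Fin n))), Cmpl H := by
    intro n e a ha b hb hne
    have : H.coe.Adj ⟨a, ha⟩ ⟨b, hb⟩ := by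
      rw [← e.map_adj_iff]
      simp only [top_adj]
      intro hcon
      exact hne (by simpa using congrArg Subtype.val (e.injective hcon))
    simpa using this
  obtain h | h := h
  · exact key 2 (Classical.choice h)
  · exact key 3 (Classical.choice h)

lemma ncard_of_isK2 {H : AmbGraph α} (h : IsK2 H) : H.verts.ncard = 2 := by
  have e := Classical.choice h
  have := Nat.card_congr e.toEquiv
  simpa [Nat.card_coe_set_eq] using this

lemma ncard_of_isK3 {H : AmbGraph α} (h : IsK3 H) : H.verts.ncard = 3 := by
  have e := Classical.choice h
  have := Nat.card_congr e.toEquiv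
  simpa [Nat.card_coe_set_eq] using this

def Conds (Ls : List (AmbGraph α)) : Prop :=
  ∀ i : ℕ, (h : i + 1 < Ls.length) →
     IsK2 (unionList (Ls.take (i + 1)) ⊓ Ls.get ⟨i + 1, h⟩) ∨
     IsK3 (unionList (Ls.take (i + 1)) ⊓ Ls.get ⟨i + 1, h⟩)

lemma step_cmpl {Ls : List (AmbGraph α)} (hC : Conds Ls) {r : ℕ} (hr : r < Ls.length)
    (hr1 : 1 ≤ r) : Cmpl (unionList (Ls.take r) ⊓ Ls.get ⟨r, hr⟩) := by
  obtain ⟨s, rfl⟩ : ∃ s, r = s + 1 := ⟨r - 1, by omega⟩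
  exact cmpl_of_isK2K3 (hC s hr)

lemma get_le_unionList_take {Ls : List (AmbGraph α)} {p r : ℕ} (hp : p < Ls.length)
    (hpr : p < r) : Ls.get ⟨p, hp⟩ ≤ unionList (Ls.take r) := by
  apply le_unionList
  have hlen : p < (Ls.take r).length := by
    simp only [List.length_take]; omega
  have : (Ls.take r).get ⟨p, hlen⟩ = Ls.get ⟨p, hp⟩ := by
    simp [List.getElem_take]
  rw [← this]
  exact List.get_mem _ _

lemma unionList_take_adj_piece {Ls : List (AmbGraph α)} {r : ℕ} {a b : α}
    (h : (unionList (Ls.take r)).Adj a b) :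
    ∃ (l : ℕ) (hl : l < Ls.length), l < r ∧ (Ls.get ⟨l, hl⟩).Adj a b := by
  obtain ⟨H, hH, hadj⟩ := unionList_adj.mp h
  obtain ⟨l, hlen, rfl⟩ := List.mem_iff_getElem.mp hH
  have hl2 : l < r ∧ l < Ls.length := by
    simp only [List.length_take, Nat.lt_min] at hlen; exact hlen
  refine ⟨l, hl2.2, hl2.1, ?_⟩
  simpa using hadj

open Classical in
lemma exists_min_pair_piece {Ls : List (AmbGraph α)} (hC : Conds Ls) {a b : α}
    (hab : ∃ (l : ℕ) (hl : l < Ls.length), (Ls.get ⟨l, hl⟩).Adj a b) :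
    ∃ (p : ℕ) (hp : p < Ls.length), (Ls.get ⟨p, hp⟩).Adj a b ∧
      ∀ (l : ℕ) (hl : l < Ls.length),
        a ∈ (Ls.get ⟨l, hl⟩).verts → b ∈ (Ls.get ⟨l, hl⟩).verts → p ≤ l := by
  have hQ : ∃ l, ∃ hl : l < Ls.length, (Ls.get ⟨l, hl⟩).Adj a b := hab
  have hP : ∃ l, ∃ hl : l < Ls.length,
      a ∈ (Ls.get ⟨l, hl⟩).verts ∧ b ∈ (Ls.get ⟨l, hl⟩).verts := by
    obtain ⟨l, hl, h⟩ := hQ; exact ⟨l, hl, h.fst_mem, h.snd_mem⟩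
  obtain ⟨hp, hpa, hpb⟩ := Nat.find_spec hP
  obtain ⟨hr, hradj⟩ := Nat.find_spec hQ
  have hpr : Nat.find hP ≤ Nat.find hQ :=
    Nat.find_min' hP ⟨hr, hradj.fst_mem, hradj.snd_mem⟩
  have hkey : (Ls.get ⟨Nat.find hP, hp⟩).Adj a b := by
    rcases eq_or_lt_of_le hpr with heq | hlt
    · have hEq : Ls.get ⟨Nat.find hP, hp⟩ = Ls.get ⟨Nat.find hQ, hr⟩ := by
        congr 1
        exact Fin.ext heq
      rw [hEq]; exact hradj
    · exfalso
      have h1r : 1 ≤ Nat.find hQ := by omega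
      have hcm := step_cmpl hC hr h1r
      have haU : a ∈ (unionList (Ls.take (Nat.find hQ))).verts :=
        (get_le_unionList_take hp hlt).1 hpa
      have hbU : b ∈ (unionList (Ls.take (Nat.find hQ))).verts :=
        (get_le_unionList_take hp hlt).1 hpb
      have hne : a ≠ b := hradj.ne
      have hadj2 : (unionList (Ls.take (Nat.find hQ)) ⊓ Ls.get ⟨Nat.find hQ, hr⟩).Adj a b :=
        hcm ⟨haU, hradj.fst_mem⟩ ⟨hbU, hradj.snd_mem⟩ hne
      obtain ⟨l, hl, hlr, hladj⟩ :=
        unionList_take_adj_piece (Subgraph.inf_adj.mp hadj2).1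
      exact absurd (Nat.find_min' hQ ⟨hl, hladj⟩) (by omega)
  exact ⟨Nat.find hP, hp, hkey, fun l hl h1 h2 => Nat.find_min' hP ⟨hl, h1, h2⟩⟩

open Classical in
lemma no_new_pair {Ls : List (AmbGraph α)} (hC : Conds Ls) {a b : α} {p q r : ℕ}
    (hp : p < Ls.length) (hq : q < p) (hr : r < p)
    (hqlen : q < Ls.length) (hrlen : r < Ls.length)
    (ha : a ∈ (Ls.get ⟨q, hqlen⟩).verts) (hb : b ∈ (Ls.get ⟨r, hrlen⟩).verts)
    (hap : a ∈ (Ls.get ⟨p, hp⟩).verts) (hbp : b ∈ (Ls.get ⟨p, hp⟩).verts)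
    (hne : a ≠ b)
    (hmin : ∀ (l : ℕ) (hl : l < Ls.length),
      a ∈ (Ls.get ⟨l, hl⟩).verts → b ∈ (Ls.get ⟨l, hl⟩).verts → p ≤ l) : False := by
  have hcm := step_cmpl hC hp (by omega)
  have haU : a ∈ (unionList (Ls.take p)).verts := (get_le_unionList_take hqlen hq).1 ha
  have hbU : b ∈ (unionList (Ls.take p)).verts := (get_le_unionList_take hrlen hr).1 hb
  have hadj : (unionList (Ls.take p) ⊓ Ls.get ⟨p, hp⟩).Adj a b :=
    hcm ⟨haU, hap⟩ ⟨hbU, hbp⟩ hne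
  obtain ⟨l, hl, hlp, hladj⟩ := unionList_take_adj_piece (Subgraph.inf_adj.mp hadj).1
  exact absurd (hmin l hl hladj.fst_mem hladj.snd_mem) (by omega)

open Classical in
lemma exists_good_piece {Ls : List (AmbGraph α)} (hC : Conds Ls) (x : AmbGraph α)
    (hS : IsK2 (unionList Ls ⊓ x) ∨ IsK3 (unionList Ls ⊓ x)) :
    ∃ (m : ℕ) (hm : m < Ls.length), Ls.get ⟨m, hm⟩ ⊓ x = unionList Ls ⊓ x := by
  have hcmpl : Cmpl (unionList Ls ⊓ x) := cmpl_of_isK2K3 hS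
  have hSle : (unionList Ls ⊓ x) ≤ unionList Ls := inf_le_left
  have hSx : (unionList Ls ⊓ x) ≤ x := inf_le_right
  have toPiece : ∀ {a b : α}, (unionList Ls).Adj a b →
      ∃ (l : ℕ) (hl : l < Ls.length), (Ls.get ⟨l, hl⟩).Adj a b := by
    intro a b h
    obtain ⟨H, hH, hadj⟩ := unionList_adj.mp h
    obtain ⟨l, hl, rfl⟩ := List.mem_iff_getElem.mp hH
    exact ⟨l, hl, by simpa using hadj⟩
  rcases hS with h2 | h3
  · -- K2 case
    obtain ⟨u, v, huv, hverts⟩ := Set.ncard_eq_two.mp (ncard_of_isK2 h2)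
    have hu : u ∈ (unionList Ls ⊓ x).verts := by rw [hverts]; exact Set.mem_insert _ _
    have hv : v ∈ (unionList Ls ⊓ x).verts := by
      rw [hverts]; exact Set.mem_insert_iff.mpr (Or.inr rfl)
    have hSadj : (unionList Ls ⊓ x).Adj u v := hcmpl hu hv huv
    obtain ⟨m, hm, hmadj⟩ := toPiece (hSle.2 hSadj)
    refine ⟨m, hm, le_antisymm (inf_le_inf_right x (le_unionList (List.get_mem _ _))) ?_⟩
    refine le_inf ⟨?_, ?_⟩ hSx
    · intro a ha
      rw [hverts] at ha
      rcases ha with rfl | ha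
      · exact hmadj.fst_mem
      · rw [Set.mem_singleton_iff] at ha; subst ha; exact hmadj.snd_mem
    · intro a b hab
      have ha := hab.fst_mem; have hb := hab.snd_mem
      rw [hverts] at ha hb
      have hne := hab.ne
      simp only [Set.mem_insert_iff, Set.mem_singleton_iff] at ha hb
      rcases ha with rfl | rfl <;> rcases hb with rfl | rfl
      · exact absurd rfl hne
      · exact hmadj
      · exact hmadj.symm
      · exact absurd rfl hne
  · -- K3 case
    obtain ⟨u, v, w, huv, huw, hvw, hverts⟩ := Set.ncard_eq_three.mp (ncard_of_isK3 h3)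
    have hu : u ∈ (unionList Ls ⊓ x).verts := by rw [hverts]; simp
    have hv : v ∈ (unionList Ls ⊓ x).verts := by rw [hverts]; simp
    have hw : w ∈ (unionList Ls ⊓ x).verts := by rw [hverts]; simp
    have Suv : (unionList Ls ⊓ x).Adj u v := hcmpl hu hv huv
    have Svw : (unionList Ls ⊓ x).Adj v w := hcmpl hv hw hvw
    have Suw : (unionList Ls ⊓ x).Adj u w := hcmpl hu hw huw
    obtain ⟨p1, hp1, adj1, min1⟩ := exists_min_pair_piece hC (toPiece (hSle.2 Suv))
    obtain ⟨p2, hp2, adj2, min2⟩ := exists_min_pair_piece hC (toPiece (hSle.2 Svw))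
    obtain ⟨p3, hp3, adj3, min3⟩ := exists_min_pair_piece hC (toPiece (hSle.2 Suw))
    have hall : ∃ (m : ℕ) (hm : m < Ls.length), u ∈ (Ls.get ⟨m, hm⟩).verts ∧
        v ∈ (Ls.get ⟨m, hm⟩).verts ∧ w ∈ (Ls.get ⟨m, hm⟩).verts := by
      by_contra hno
      push_neg at hno
      have h12 : p1 ≠ p2 := by
        intro h; subst h
        exact hno p1 hp1 adj1.fst_mem adj1.snd_mem adj2.snd_mem
      have h13 : p1 ≠ p3 := by
        intro h; subst h
        exact hno p1 hp1 adj1.fst_mem adj1.snd_mem adj3.snd_mem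
      have h23 : p2 ≠ p3 := by
        intro h; subst h
        exact hno p2 hp2 adj3.fst_mem adj2.fst_mem adj2.snd_mem
      have htri : (p2 < p1 ∧ p3 < p1) ∨ (p1 < p2 ∧ p3 < p2) ∨ (p1 < p3 ∧ p2 < p3) := by
        omega
      rcases htri with ⟨hA, hB⟩ | ⟨hA, hB⟩ | ⟨hA, hB⟩
      · exact no_new_pair hC hp1 hB hA hp3 hp2 adj3.fst_mem adj2.fst_mem
          adj1.fst_mem adj1.snd_mem huv min1
      · exact no_new_pair hC hp2 hA hB hp1 hp3 adj1.snd_mem adj3.snd_mem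
          adj2.fst_mem adj2.snd_mem hvw min2
      · exact no_new_pair hC hp3 hA hB hp1 hp2 adj1.fst_mem adj2.snd_mem
          adj3.fst_mem adj3.snd_mem huw min3
    obtain ⟨m, hm, hmu, hmv, hmw⟩ := hall
    have padj : ∀ {a b : α} {pp : ℕ} (hpp : pp < Ls.length),
        (Ls.get ⟨pp, hpp⟩).Adj a b →
        (∀ (l : ℕ) (hl : l < Ls.length),
          a ∈ (Ls.get ⟨l, hl⟩).verts → b ∈ (Ls.get ⟨l, hl⟩).verts → pp ≤ l) →
        a ∈ (Ls.get ⟨m, hm⟩).verts → b ∈ (Ls.get ⟨m, hm⟩).verts →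
        (Ls.get ⟨m, hm⟩).Adj a b := by
      intro a b pp hpp hadj hmin ham hbm
      rcases eq_or_lt_of_le (hmin m hm ham hbm) with heq | hlt
      · have hEq : Ls.get ⟨pp, hpp⟩ = Ls.get ⟨m, hm⟩ := by congr 1; exact Fin.ext heq
        rwa [hEq] at hadj
      · have hcm := step_cmpl hC hm (by omega)
        have haU := (get_le_unionList_take hpp hlt).1 hadj.fst_mem
        have hbU := (get_le_unionList_take hpp hlt).1 hadj.snd_mem
        exact (Subgraph.inf_adj.mp (hcm ⟨haU, ham⟩ ⟨hbU, hbm⟩ hadj.ne)).2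
    have madj_uv := padj hp1 adj1 min1 hmu hmv
    have madj_vw := padj hp2 adj2 min2 hmv hmw
    have madj_uw := padj hp3 adj3 min3 hmu hmw
    refine ⟨m, hm, le_antisymm (inf_le_inf_right x (le_unionList (List.get_mem _ _))) ?_⟩
    refine le_inf ⟨?_, ?_⟩ hSx
    · intro a ha
      rw [hverts] at ha
      simp only [Set.mem_insert_iff, Set.mem_singleton_iff] at ha
      rcases ha with rfl | rfl | rfl
      · exact hmu
      · exact hmv
      · exact hmw
    · intro a b hab
      have ha := hab.fst_mem; have hb := hab.snd_mem
      rw [hverts] at ha hb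
      have hne := hab.ne
      simp only [Set.mem_insert_iff, Set.mem_singleton_iff] at ha hb
      rcases ha with rfl | rfl | rfl <;> rcases hb with rfl | rfl | rfl <;>
        first
          | exact absurd rfl hne
          | exact madj_uv
          | exact madj_uv.symm
          | exact madj_vw
          | exact madj_vw.symm
          | exact madj_uw
          | exact madj_uw.symm

end Helpers

/-- If `G` has a generating sequence `(G₁,…,G_k)`, then for every `i ∈ [k]` it also
has a generating sequence of the same length starting with `G_i`. -/
theorem genSeq_start_anywhere {α : Type*} (G : AmbGraph α)
    (L : List (AmbGraph α)) (hL : IsGenSeq L G) :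
    ∀ i : ℕ, (h : i < L.length) →
      ∃ M : List (AmbGraph α), IsGenSeq M G ∧ M.length = L.length ∧
        M.head? = some (L.get ⟨i, h⟩) := by
  obtain ⟨hne, hmem, hcond, hunion⟩ := hL
  subst hunion
  have hall : IsGenSeq L (unionList L) := ⟨hne, hmem, hcond, rfl⟩
  clear hne hmem hcond
  induction L using List.reverseRecOn with
  | nil => intro i hi; simp at hi
  | append_singleton Ls x ih =>
    intro i hi
    obtain ⟨-, hmem, hcond, -⟩ := hall
    by_cases hLs : Ls = []
    · subst hLs
      have hi0 : i = 0 := by simpa using hi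
      subst hi0
      exact ⟨[x], ⟨by simp, hmem, fun j hj => by simp at hj, rfl⟩, rfl, rfl⟩
    · have hk : 0 < Ls.length := List.length_pos_iff.mpr hLs
      have hCs : Conds Ls := by
        intro j hj
        have hj2 : j + 1 < (Ls ++ [x]).length := by simp; omega
        have h := hcond j hj2
        have e1 : (Ls ++ [x]).take (j + 1) = Ls.take (j + 1) :=
          List.take_append_of_le_length (by omega)
        have e2 : (Ls ++ [x]).get ⟨j + 1, hj2⟩ = Ls.get ⟨j + 1, hj⟩ := by
          simp [List.get_eq_getElem, List.getElem_append_left hj]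
        rwa [e1, e2] at h
      have hGSLs : IsGenSeq Ls (unionList Ls) :=
        ⟨hLs, fun H hH => hmem H (List.mem_append_left _ hH), hCs, rfl⟩
      have hS : IsK2 (unionList Ls ⊓ x) ∨ IsK3 (unionList Ls ⊓ x) := by
        have hlen : (Ls.length - 1) + 1 < (Ls ++ [x]).length := by simp; omega
        have h := hcond (Ls.length - 1) hlen
        have egraph : unionList ((Ls ++ [x]).take (Ls.length - 1 + 1)) ⊓
            (Ls ++ [x]).get ⟨Ls.length - 1 + 1, hlen⟩ = unionList Ls ⊓ x := by
          congr 1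
          · rw [show Ls.length - 1 + 1 = Ls.length by omega]
            rw [List.take_left]
          · rw [List.get_eq_getElem]
            exact List.getElem_concat_length (show Ls.length - 1 + 1 = Ls.length by omega) _
        rwa [egraph] at h
      rcases Nat.lt_or_ge i Ls.length with hiLs | hiGe
      · -- i stays in the prefix
        obtain ⟨M, hMgen, hMlen, hMhead⟩ := ih hGSLs i hiLs
        obtain ⟨hMne, hMmem, hMcond, hMun⟩ := hMgen
        refine ⟨M ++ [x], ⟨by simp, ?_, ?_, ?_⟩, by simp [hMlen], ?_⟩
        · intro H hH
          rcases List.mem_append.mp hH with h | h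
          · exact hMmem H h
          · rw [List.mem_singleton] at h; subst h
            exact hmem _ (by simp)
        · intro j hj
          have hjlen : j + 1 < M.length + 1 := by simpa using hj
          rcases Nat.lt_or_ge (j + 1) M.length with hlt | hge
          · have e1 : (M ++ [x]).take (j + 1) = M.take (j + 1) :=
              List.take_append_of_le_length (by omega)
            have e2 : (M ++ [x]).get ⟨j + 1, hj⟩ = M.get ⟨j + 1, hlt⟩ := by
              simp [List.get_eq_getElem, List.getElem_append_left hlt]
            rw [e1, e2]; exact hMcond j hlt
          · have hje : j + 1 = M.length := by omega
            have e1 : (M ++ [x]).take (j + 1) = M := by rw [hje]; exact List.take_left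
            have e2 : (M ++ [x]).get ⟨j + 1, hj⟩ = x := by
              rw [List.get_eq_getElem]
              exact List.getElem_concat_length hje _
            rw [e1, e2, hMun]; exact hS
        · rw [unionList_concat, hMun, unionList_concat]
        · have e : (Ls ++ [x]).get ⟨i, hi⟩ = Ls.get ⟨i, hiLs⟩ := by
            simp [List.get_eq_getElem, List.getElem_append_left hiLs]
          rw [e, List.head?_append, hMhead]
          rfl
      · -- i is the last position
        have hie : i = Ls.length := by simp at hi; omega
        subst hie
        obtain ⟨m, hm, hmx⟩ := exists_good_piece hCs x hS
        obtain ⟨M, hMgen, hMlen, hMhead⟩ := ih hGSLs m hm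
        obtain ⟨hMne, hMmem, hMcond, hMun⟩ := hMgen
        obtain ⟨h0, t, rfl⟩ : ∃ h0 t, M = h0 :: t := by
          cases M with
          | nil => exact absurd rfl hMne
          | cons a b => exact ⟨a, b, rfl⟩
        have hh0 : h0 = Ls.get ⟨m, hm⟩ := by simpa using hMhead
        have hgetlast : (Ls ++ [x]).get ⟨Ls.length, hi⟩ = x := by
          rw [List.get_eq_getElem]
          exact List.getElem_concat_length rfl _
        refine ⟨x :: h0 :: t, ⟨by simp, ?_, ?_, ?_⟩, ?_, by rw [hgetlast]; rfl⟩
        · intro H hH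
          rcases List.mem_cons.mp hH with rfl | h
          · exact hmem H (by simp)
          · exact hMmem H h
        · intro j hj
          rcases Nat.eq_zero_or_pos j with rfl | hjpos
          · have e : unionList ((x :: h0 :: t).take 1) ⊓ (x :: h0 :: t).get ⟨1, hj⟩
                = unionList Ls ⊓ x := by
              show unionList [x] ⊓ h0 = _
              rw [unionList_cons', show unionList ([] : List (AmbGraph α)) = ⊥ from rfl,
                sup_bot_eq, hh0, inf_comm]
              exact hmx
            rw [e]; exact hS
          · obtain ⟨j', rfl⟩ : ∃ j', j = j' + 1 := ⟨j - 1, by omega⟩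
            have hjM : j' + 1 < (h0 :: t).length := by simp at hj ⊢; omega
            have hR := hMcond j' hjM
            set P := unionList ((h0 :: t).take (j' + 1)) with hPdef
            set N := (h0 :: t).get ⟨j' + 1, hjM⟩ with hNdef
            have hRcmpl : Cmpl (P ⊓ N) := cmpl_of_isK2K3 hR
            have hNle : N ≤ unionList Ls := by
              rw [← hMun]; exact le_unionList (List.get_mem _ _)
            have hSsub : (unionList Ls ⊓ x).verts ⊆ (Ls.get ⟨m, hm⟩).verts := by
              rw [← hmx]; exact fun a ha => ha.1
            have hh0P : h0 ≤ P := by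
              rw [hPdef, List.take_succ_cons, unionList_cons']
              exact le_sup_left
            have hvsub : ((x ⊔ P) ⊓ N).verts ⊆ (P ⊓ N).verts := by
              intro a ha
              simp only [Subgraph.verts_inf, Subgraph.verts_sup, Set.mem_inter_iff,
                Set.mem_union] at ha ⊢
              obtain ⟨hax | haP, haN⟩ := ha
              · refine ⟨?_, haN⟩
                have haU : a ∈ (unionList Ls).verts := hNle.1 haN
                have : a ∈ (Ls.get ⟨m, hm⟩).verts := hSsub ⟨haU, hax⟩
                exact hh0P.1 (by rw [hh0]; exact this)
              · exact ⟨haP, haN⟩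
            have hEq : (x ⊔ P) ⊓ N = P ⊓ N := by
              refine le_antisymm ?_ (inf_le_inf_right N le_sup_right)
              refine ⟨hvsub, ?_⟩
              intro a b hab
              exact hRcmpl (hvsub hab.fst_mem) (hvsub hab.snd_mem) hab.ne
            have efinal : unionList ((x :: h0 :: t).take (j' + 1 + 1)) ⊓
                (x :: h0 :: t).get ⟨j' + 1 + 1, hj⟩ = P ⊓ N := by
              rw [List.take_succ_cons, unionList_cons']
              exact hEq
            rw [efinal]; exact hR
        · rw [unionList_cons', hMun, unionList_concat, sup_comm]
        · simp only [List.length_cons, List.length_append, List.length_singleton,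
            List.length_nil] at hMlen ⊢
          omega
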